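/- Let G be an acyclic transitive digraph on a finite vertex set V and let H be an orientation of the complement of G. Then G \ ucl(tcl(H)) is a transitive orientation of the complement of tcl(H). -/

import Mathlib

/-- Undirected closure of a digraph: `E ∪ E⁻¹`. -/
def ucl {V : Type*} (E : V → V → Prop) : V → V → Prop := fun a b => E a b ∨ E b a

/-- Complement of a digraph: all pairs of distinct vertices not in `ucl E`. -/
def cmpl {V : Type*} (E : V → V → Prop) : V → V → Prop := fun a b => a ≠ b ∧ ¬ ucl E a b

/-- A digraph is oriented iff `E ∩ E⁻¹ = ∅`. -/
def Oriented {V : Type*} (E : V → V → Prop) : Prop := ∀ a b, E a b → ¬ E b a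

/-- `O` is an orientation of `E`: a maximal oriented subset of `E`. -/
def IsOrientation {V : Type*} (O E : V → V → Prop) : Prop :=
  (∀ a b, O a b → E a b) ∧ Oriented O ∧
    ∀ O' : V → V → Prop, (∀ a b, O' a b → E a b) → Oriented O' →
      (∀ a b, O a b → O' a b) → ∀ a b, O' a b → O a b

/-- Transitivity of a digraph: `(a,b) ∈ E`, `(b,c) ∈ E` and `a ≠ c` imply `(a,c) ∈ E`. -/
def TransD {V : Type*} (E : V → V → Prop) : Prop :=
  ∀ a b c, E a b → E b c → a ≠ c → E a c

/-- Transitive closure of a digraph. -/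
def tcl {V : Type*} (E : V → V → Prop) : V → V → Prop := Relation.TransGen E

/-- A digraph is acyclic iff its transitive closure is irreflexive. -/
def Acyclic {V : Type*} (E : V → V → Prop) : Prop := Irreflexive (tcl E)

/-- A transitive orientation of `E` is an orientation of `E` that is transitive. -/
def IsTransOrientation {V : Type*} (O E : V → V → Prop) : Prop :=
  IsOrientation O E ∧ TransD O

/-- `E` is transitively orientable iff it has a transitive orientation. -/
def TransOrientable {V : Type*} (E : V → V → Prop) : Prop := ∃ O, IsTransOrientation O E

/-- `L` is a strict linear order on the vertex set. -/
def IsStrictLinear {V : Type*} (L : V → V → Prop) : Prop :=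
  Irreflexive L ∧ Transitive L ∧ ∀ a b : V, a ≠ b → L a b ∨ L b a

/-- `E` is 2-dimensional: the intersection of two strict linear orders. -/
def TwoDim {V : Type*} (E : V → V → Prop) : Prop :=
  ∃ L₁ L₂ : V → V → Prop, IsStrictLinear L₁ ∧ IsStrictLinear L₂ ∧
    ∀ a b, E a b ↔ L₁ a b ∧ L₂ a b

/-- Direct forcing `Γ` between edges of an undirected graph `E`:
`(a,b) Γ (c,d)` iff both are edges of `E` and either `a = c` with `b, d` non-adjacent,
or `b = d` with `a, c` non-adjacent. -/
def Forces {V : Type*} (E : V → V → Prop) (e f : V × V) : Prop :=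
  E e.1 e.2 ∧ E f.1 f.2 ∧
    ((e.1 = f.1 ∧ e.2 ≠ f.2 ∧ ¬ E e.2 f.2) ∨ (e.2 = f.2 ∧ e.1 ≠ f.1 ∧ ¬ E e.1 f.1))

/-- `S` is a 2-dimensional subgraph of `G`: a subgraph that is a 2-dimensional
acyclic transitive digraph. -/
def TwoDimSubgraph {V : Type*} (G S : V → V → Prop) : Prop :=
  (∀ a b, S a b → G a b) ∧ Irreflexive S ∧ TransD S ∧ Acyclic S ∧ TwoDim S

/-- A permutation graph: an undirected graph such that both it and its complement
are transitively orientable. -/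
def PermGraph {V : Type*} (E : V → V → Prop) : Prop :=
  Irreflexive E ∧ (∀ a b, E a b → E b a) ∧ TransOrientable E ∧ TransOrientable (cmpl E)

/-- `S` is a permutation subgraph of `G`: an undirected subgraph of `G` that is a
permutation graph. -/
def PermSubgraph {V : Type*} (G S : V → V → Prop) : Prop :=
  (∀ a b, S a b → G a b) ∧ PermGraph S


private lemma dich_aux {V : Type*} (G H : V → V → Prop) (hH : IsOrientation H (cmpl G)) :
    ∀ a b, a ≠ b → ¬ ucl G a b → H a b ∨ H b a := by
  intro a b hne hn
  by_contra hc
  push_neg at hc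
  obtain ⟨hsub, hor, hmax⟩ := hH
  have key := hmax (fun x y => H x y ∨ (x = a ∧ y = b)) ?_ ?_
      (fun x y h => Or.inl h) a b (Or.inr ⟨rfl, rfl⟩)
  · exact hc.1 key
  · rintro x y (h | ⟨rfl, rfl⟩)
    · exact hsub x y h
    · exact ⟨hne, hn⟩
  · rintro x y (h | ⟨rfl, rfl⟩) (h' | ⟨rfl, h2⟩)
    · exact hor x y h h'
    · exact hc.2 (h2 ▸ h)
    · exact hc.2 h'
    · exact hne rfl

private lemma key_aux {V : Type*} (G H : V → V → Prop)
    (htrans : TransD G)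
    (hsub : ∀ a b, H a b → a ≠ b ∧ ¬ ucl G a b)
    (hdich : ∀ a b, a ≠ b → ¬ ucl G a b → H a b ∨ H b a) :
    ∀ a c b, tcl H a c → G a b → ¬ tcl H a b → ¬ tcl H b c → G c b := by
  intro a c b h
  induction h using Relation.TransGen.head_induction_on with
  | single h' =>
    rename_i a'
    intro hab hnab hnbc
    have hac := hsub a' c h'
    have hcb : c ≠ b := by
      rintro rfl
      exact hnab (Relation.TransGen.single h')
    by_cases h1 : G c b
    · exact h1
    by_cases h2 : G b c
    · exact absurd (Or.inl (htrans a' b c hab h2 hac.1)) hac.2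
    rcases hdich c b hcb (fun h => h.elim h1 h2) with h3 | h3
    · exact absurd (Relation.TransGen.head h' (Relation.TransGen.single h3)) hnab
    · exact absurd (Relation.TransGen.single h3) hnbc
  | head h' ht IH =>
    rename_i a' x
    intro hab hnab hnbc
    have hax := hsub a' x h'
    have hxb : x ≠ b := by
      rintro rfl
      exact hnab (Relation.TransGen.single h')
    by_cases h1 : G x b
    · exact IH h1 (fun h => hnab (Relation.TransGen.head h' h)) hnbc
    by_cases h2 : G b x
    · exact absurd (Or.inl (htrans a' b x hab h2 hax.1)) hax.2
    rcases hdich x b hxb (fun h => h.elim h1 h2) with h3 | h3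
    · exact absurd (Relation.TransGen.head h' (Relation.TransGen.single h3)) hnab
    · exact absurd (Relation.TransGen.head h3 ht) hnbc

theorem induced_subgraph_is_transitive_orientation
    {V : Type*} [Fintype V] (G H : V → V → Prop)
    (hirr : Irreflexive G) (hacyc : Acyclic G) (htrans : TransD G)
    (hH : IsOrientation H (cmpl G)) :
    IsTransOrientation (fun a b => G a b ∧ ¬ ucl (tcl H) a b) (cmpl (tcl H)) := by

  have hGor : ∀ a b, G a b → ¬ G b a := fun a b h h' =>
    hacyc a (Relation.TransGen.head h (Relation.TransGen.single h'))
  have hsubH : ∀ a b, H a b → a ≠ b ∧ ¬ ucl G a b := fun a b h => hH.1 a b h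
  have hd := dich_aux G H hH
  constructor
  · refine ⟨fun a b h => ⟨fun he => hirr a (he ▸ h.1), h.2⟩, fun a b h h' => hGor a b h.1 h'.1, ?_⟩
    intro O' hO'sub hO'or hOO' a b hO'ab
    refine ⟨?_, (hO'sub a b hO'ab).2⟩
    have hne := (hO'sub a b hO'ab).1
    by_cases h1 : G a b
    · exact h1
    by_cases h2 : G b a
    · exact absurd (hOO' b a ⟨h2, fun h => (hO'sub a b hO'ab).2 (h.symm)⟩)
        (fun h => hO'or a b hO'ab h)
    rcases hd a b hne (fun h => h.elim h1 h2) with h3 | h3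
    · exact absurd (Or.inl (Relation.TransGen.single h3)) (hO'sub a b hO'ab).2
    · exact absurd (Or.inr (Relation.TransGen.single h3)) (hO'sub a b hO'ab).2
  · rintro a b c ⟨hab, h1⟩ ⟨hbc, h2⟩ hac
    refine ⟨htrans a b c hab hbc hac, ?_⟩
    rintro (h | h)
    · have := key_aux G H htrans hsubH hd a c b h hab
        (fun h' => h1 (Or.inl h')) (fun h' => h2 (Or.inl h'))
      exact hGor b c hbc this
    · have htransf : TransD (fun x y => G y x) :=
        fun x y z hxy hyz hne => htrans z y x hyz hxy hne.symm
      have hsubf : ∀ x y, H x y → x ≠ y ∧ ¬ ucl (fun x y => G y x) x y := by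
        intro x y hxy
        obtain ⟨hne, hn⟩ := hsubH x y hxy
        exact ⟨hne, fun h => hn h.symm⟩
      have hdf : ∀ x y, x ≠ y → ¬ ucl (fun x y => G y x) x y → H x y ∨ H y x := by
        intro x y hne hn
        exact hd x y hne (fun h => hn h.symm)
      have := key_aux (fun x y => G y x) H htransf hsubf hdf c a b h hbc
        (fun h' => h2 (Or.inr h')) (fun h' => h1 (Or.inr h'))
      exact hGor a b hab this
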